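/- Let H ∈ C⁰([0,∞);ℝ) ∩ L¹((0,∞)), α_i > 0, β_i ∈ [0,1) for i = 1,…,m, and C > 0. Let F ∈ C¹((0,∞)) ∩ C⁰([0,∞)) satisfy F ≥ 0, F(0) ≤ C, and |F'(t)| ≤ C Σ_i ⟨t⟩^{α_i} F(t)^{β_i} + H(t) F(t) for t > 0. Then there exists K = K(α_i, β_i, H, C) > 0 such that F(t) ≤ max_{i} (K + Km⟨t⟩^{α_i+1})^{1/(1−β_i)} for all t > 0. -/

import Mathlib

open MeasureTheory Filter Set
set_option maxHeartbeats 1000000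

/-- nonlinear Gronwall-type lemma with sublinear powers of `F`. -/
theorem nonlinear_gronwall (m : ℕ) (hm : 0 < m)
    (H : ℝ → ℝ) (hHc : ContinuousOn H (Ici 0)) (hH1 : IntegrableOn H (Ioi 0))
    (α β : Fin m → ℝ) (hα : ∀ i, 0 < α i) (hβ : ∀ i, β i ∈ Ico (0 : ℝ) 1)
    (C : ℝ) (hC : 0 < C)
    (F : ℝ → ℝ) (hFc : ContinuousOn F (Ici 0)) (hFd : ∀ t ∈ Ioi (0 : ℝ), DifferentiableAt ℝ F t)
    (hFpos : ∀ t ∈ Ioi (0 : ℝ), 0 ≤ F t) (hF0 : F 0 ≤ C)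
    (hFineq : ∀ t ∈ Ioi (0 : ℝ),
      |deriv F t| ≤ C * (∑ i, Real.sqrt (1 + t ^ 2) ^ (α i) * (F t) ^ (β i)) + H t * F t) :
    ∃ K > 0, ∀ t ∈ Ioi (0 : ℝ), ∃ i : Fin m,
      F t ≤ (K + K * m * Real.sqrt (1 + t ^ 2) ^ (α i + 1)) ^ ((1 : ℝ) / (1 - β i)) := by
  have hHabs_int : IntegrableOn (fun t => |H t|) (Ioi 0) := hH1.abs
  set A : ℝ := ∫ t in Ioi (0:ℝ), |H t| with hA_def
  have hA0 : 0 ≤ A := setIntegral_nonneg measurableSet_Ioi (fun x _ => abs_nonneg _)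
  set E : ℝ := Real.exp A with hE_def
  have hE1 : (1:ℝ) ≤ E := Real.one_le_exp hA0
  have hEpos : 0 < E := lt_of_lt_of_le one_pos hE1
  refine ⟨2 * C * E + 1, by positivity, ?_⟩
  set K : ℝ := 2 * C * E + 1 with hK_def
  have hK1 : (1:ℝ) ≤ K := by nlinarith
  have hKCE : 2 * C * E ≤ K := by nlinarith
  intro T hT
  rw [mem_Ioi] at hT
  -- primitive of |H|
  set h : ℝ → ℝ := fun t => ∫ s in (0:ℝ)..t, |H s| with hh_def
  have habs_cont : ContinuousOn (fun t => |H t|) (Ici 0) := hHc.abs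
  have hh_nonneg : ∀ t, 0 ≤ t → 0 ≤ h t := by
    intro t ht
    exact intervalIntegral.integral_nonneg ht (fun x _ => abs_nonneg _)
  have hh_le : ∀ t, 0 ≤ t → h t ≤ A := by
    intro t ht
    show (∫ s in (0:ℝ)..t, |H s|) ≤ A
    rw [intervalIntegral.integral_of_le ht]
    exact setIntegral_mono_set hHabs_int (Eventually.of_forall fun x => abs_nonneg _)
      (HasSubset.Subset.eventuallyLE Ioc_subset_Ioi_self)
  have hh_deriv : ∀ t, 0 < t → HasDerivAt h (|H t|) t := by
    intro t ht
    have hmem : Ici (0:ℝ) ∈ nhds t := Ici_mem_nhds ht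
    have hca : ContinuousAt (fun s => |H s|) t := habs_cont.continuousAt hmem
    have hii : IntervalIntegrable (fun s => |H s|) volume 0 t := by
      rw [intervalIntegrable_iff_integrableOn_Ioc_of_le ht.le]
      exact hHabs_int.mono_set Ioc_subset_Ioi_self
    exact intervalIntegral.integral_hasDerivAt_right hii
      (ContinuousOn.stronglyMeasurableAtFilter isOpen_Ioi (habs_cont.mono Ioi_subset_Ici_self) t ht)
      hca
  have hh_cont : ContinuousOn h (Icc 0 T) := by
    have : IntegrableOn (fun s => |H s|) (uIcc 0 T) := by
      rw [uIcc_of_le hT.le, integrableOn_Icc_iff_integrableOn_Ioc]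
      exact hHabs_int.mono_set Ioc_subset_Ioi_self
    simpa [uIcc_of_le hT.le] using intervalIntegral.continuousOn_primitive_interval this
  -- G
  set G : ℝ → ℝ := fun t => F t * Real.exp (-(h t)) with hG_def
  have hG_cont : ContinuousOn G (Icc 0 T) := by
    apply ContinuousOn.mul (hFc.mono (Icc_subset_Ici_self))
    exact (hh_cont.neg.rexp)
  have hG_nonneg : ∀ t, 0 < t → 0 ≤ G t := fun t ht =>
    mul_nonneg (hFpos t ht) (Real.exp_nonneg _)
  have hG0 : G 0 ≤ C := by
    simp only [hG_def, hh_def]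
    simp [intervalIntegral.integral_same]
    exact hF0
  -- max of G on [0, T]
  obtain ⟨s₀, hs₀mem, hs₀max⟩ : ∃ s₀ ∈ Icc (0:ℝ) T, ∀ s ∈ Icc (0:ℝ) T, G s ≤ G s₀ := by
    obtain ⟨s₀, hmem, hmax⟩ := isCompact_Icc.exists_isMaxOn (nonempty_Icc.2 hT.le) hG_cont
    exact ⟨s₀, hmem, fun s hs => hmax hs⟩
  set M : ℝ := G s₀ with hM_def
  have hM_nonneg : 0 ≤ M := le_trans (hG_nonneg T hT) (hs₀max T ⟨hT.le, le_refl T⟩)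
  set τ : ℝ := Real.sqrt (1 + T ^ 2) with hτ_def
  have hτ1 : (1:ℝ) ≤ τ := by
    rw [hτ_def]
    nlinarith [Real.sq_sqrt (show (0:ℝ) ≤ 1 + T ^ 2 by positivity),
      Real.sqrt_nonneg (1 + T ^ 2)]
  have hτpos : 0 < τ := lt_of_lt_of_le one_pos hτ1
  -- derivative bound for G on (0, T)
  set L : ℝ := C * ∑ i, τ ^ (α i) * M ^ (β i) with hL_def
  have hGderiv : ∀ t ∈ Ioo (0:ℝ) T, HasDerivAt G
      (deriv F t * Real.exp (-(h t)) + F t * (Real.exp (-(h t)) * -|H t|)) t := by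
    intro t ht
    have hF' : HasDerivAt F (deriv F t) t := (hFd t ht.1).hasDerivAt
    have hh' : HasDerivAt (fun s => Real.exp (-(h s))) (Real.exp (-(h t)) * -|H t|) t := by
      have := ((hh_deriv t ht.1).neg).exp
      simpa [mul_comm] using this
    exact hF'.mul hh'
  have hGderiv_le : ∀ t ∈ Ioo (0:ℝ) T,
      deriv F t * Real.exp (-(h t)) + F t * (Real.exp (-(h t)) * -|H t|) ≤ L := by
    intro t ht
    have ht0 : (0:ℝ) < t := ht.1
    have hFt : 0 ≤ F t := hFpos t ht0
    have hexp_pos : 0 < Real.exp (-(h t)) := Real.exp_pos _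
    have h1 : deriv F t * Real.exp (-(h t)) + F t * (Real.exp (-(h t)) * -|H t|)
        ≤ (C * (∑ i, Real.sqrt (1 + t ^ 2) ^ (α i) * (F t) ^ (β i)) + H t * F t)
            * Real.exp (-(h t)) - F t * |H t| * Real.exp (-(h t)) := by
      have := hFineq t ht0
      have hd : deriv F t ≤ C * (∑ i, Real.sqrt (1 + t ^ 2) ^ (α i) * (F t) ^ (β i)) + H t * F t :=
        le_trans (le_abs_self _) this
      nlinarith [mul_le_mul_of_nonneg_right hd hexp_pos.le]
    have h2 : (C * (∑ i, Real.sqrt (1 + t ^ 2) ^ (α i) * (F t) ^ (β i)) + H t * F t)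
            * Real.exp (-(h t)) - F t * |H t| * Real.exp (-(h t))
        ≤ C * (∑ i, Real.sqrt (1 + t ^ 2) ^ (α i) * (F t) ^ (β i)) * Real.exp (-(h t)) := by
      have : H t ≤ |H t| := le_abs_self _
      nlinarith [mul_nonneg (mul_nonneg hFt (sub_nonneg.2 this)) hexp_pos.le]
    refine le_trans h1 (le_trans h2 ?_)
    -- now termwise
    rw [hL_def, mul_comm _ (Real.exp (-(h t))), ← mul_assoc]
    rw [mul_comm (Real.exp (-(h t))) C, mul_assoc, Finset.mul_sum]
    apply mul_le_mul_of_nonneg_left _ hC.le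
    apply Finset.sum_le_sum
    intro i _
    have hβi := hβ i
    have hst : Real.sqrt (1 + t ^ 2) ≤ τ := by
      rw [hτ_def]; apply Real.sqrt_le_sqrt; nlinarith [ht.2, ht0]
    have hs1 : (1:ℝ) ≤ Real.sqrt (1 + t ^ 2) := by
      nlinarith [Real.sq_sqrt (show (0:ℝ) ≤ 1 + t ^ 2 by positivity),
        Real.sqrt_nonneg (1 + t ^ 2)]
    have hpow1 : Real.sqrt (1 + t ^ 2) ^ (α i) ≤ τ ^ (α i) :=
      Real.rpow_le_rpow (by linarith) hst (hα i).le
    -- F t ^ β * exp(-(h t)) ≤ M ^ β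
    have hFβ : F t ^ (β i) * Real.exp (-(h t)) ≤ M ^ (β i) := by
      have hGt : G t ≤ M := hs₀max t ⟨ht0.le, ht.2.le⟩
      have hGt0 : 0 ≤ G t := hG_nonneg t ht0
      have key : F t ^ (β i) * Real.exp (-(h t)) ≤ G t ^ (β i) := by
        have hht : 0 ≤ h t := hh_nonneg t ht0.le
        have hFeq : F t = G t * Real.exp (h t) := by
          simp only [hG_def]; rw [mul_assoc, ← Real.exp_add]; simp
        have heq : F t ^ (β i) * Real.exp (-(h t))
            = G t ^ (β i) * Real.exp (h t * β i + -h t) := by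
          rw [hFeq, Real.mul_rpow hGt0 (Real.exp_nonneg _), ← Real.exp_mul, mul_assoc,
            ← Real.exp_add]
        rw [heq]
        have hle1 : Real.exp (h t * β i + -h t) ≤ 1 := by
          rw [Real.exp_le_one_iff]
          nlinarith [hβi.1, hβi.2]
        nlinarith [Real.rpow_nonneg hGt0 (β i), Real.exp_pos (h t * β i + -h t)]
      exact le_trans key (Real.rpow_le_rpow hGt0 hGt hβi.1)
    calc Real.exp (-(h t)) * (Real.sqrt (1 + t ^ 2) ^ (α i) * F t ^ (β i))
        = Real.sqrt (1 + t ^ 2) ^ (α i) * (F t ^ (β i) * Real.exp (-(h t))) := by ring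
      _ ≤ τ ^ (α i) * M ^ (β i) := by
          apply mul_le_mul hpow1 hFβ (by positivity)
          positivity
  have hL_nonneg : 0 ≤ L := by
    apply mul_nonneg hC.le
    apply Finset.sum_nonneg
    intro i _
    exact mul_nonneg (Real.rpow_nonneg hτpos.le _) (Real.rpow_nonneg hM_nonneg _)
  -- integral inequality: M ≤ C + L * T
  have hM_le : M ≤ C + L * T := by
    rcases eq_or_lt_of_le hs₀mem.1 with h0 | h0
    · have hMG0 : M = G 0 := by rw [hM_def, ← h0]
      have : 0 ≤ L * T := mul_nonneg hL_nonneg hT.le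
      linarith [hG0]
    · set φ : ℝ → ℝ := fun s => L * s - G s with hφ_def
      have hφc : ContinuousOn φ (Icc 0 s₀) :=
        ((continuousOn_const.mul continuousOn_id).sub
          (hG_cont.mono (Icc_subset_Icc_right hs₀mem.2)))
      have hder : ∀ x ∈ Ioo (0:ℝ) s₀, HasDerivAt φ
          (L - (deriv F x * Real.exp (-(h x)) + F x * (Real.exp (-(h x)) * -|H x|))) x := by
        intro x hx
        have hx' : x ∈ Ioo (0:ℝ) T := ⟨hx.1, lt_of_lt_of_le hx.2 hs₀mem.2⟩
        have h1 : HasDerivAt (fun s : ℝ => L * s) L x := by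
          simpa using (hasDerivAt_id x).const_mul L
        exact h1.sub (hGderiv x hx')
      have hφm : MonotoneOn φ (Icc 0 s₀) := by
        apply monotoneOn_of_deriv_nonneg (convex_Icc 0 s₀) hφc
        · intro x hx
          rw [interior_Icc] at hx
          exact (hder x hx).differentiableAt.differentiableWithinAt
        · intro x hx
          rw [interior_Icc] at hx
          rw [(hder x hx).deriv]
          have hx' : x ∈ Ioo (0:ℝ) T := ⟨hx.1, lt_of_lt_of_le hx.2 hs₀mem.2⟩
          linarith [hGderiv_le x hx']
      have hmono := hφm (left_mem_Icc.2 h0.le) (right_mem_Icc.2 h0.le) h0.le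
      have hφ0 : φ 0 = - G 0 := by simp [hφ_def]
      have hφs : φ s₀ = L * s₀ - M := by simp [hφ_def, hM_def]
      have hLs : L * s₀ ≤ L * T := mul_le_mul_of_nonneg_left hs₀mem.2 hL_nonneg
      rw [hφ0, hφs] at hmono
      linarith [hG0]
  have hTτ : T ≤ τ := by
    nlinarith [Real.sq_sqrt (show (0:ℝ) ≤ 1 + T ^ 2 by positivity),
      Real.sqrt_nonneg (1 + T ^ 2)]
  have hsum : M ≤ C + C * ∑ i, τ ^ (α i + 1) * M ^ (β i) := by
    have hLT : L * T ≤ C * ∑ i, τ ^ (α i + 1) * M ^ (β i) := by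
      have hLeq : L * T = ∑ i, C * (τ ^ α i * M ^ β i) * T := by
        rw [hL_def, Finset.mul_sum, Finset.sum_mul]
      rw [hLeq, Finset.mul_sum]
      apply Finset.sum_le_sum
      intro i _
      have h1 : τ ^ (α i + 1) = τ ^ (α i) * τ := by
        rw [Real.rpow_add hτpos, Real.rpow_one]
      rw [h1]
      calc C * (τ ^ α i * M ^ β i) * T = C * ((T * τ ^ α i) * M ^ β i) := by ring
        _ ≤ C * ((τ * τ ^ α i) * M ^ β i) := by
            apply mul_le_mul_of_nonneg_left _ hC.le
            apply mul_le_mul_of_nonneg_right _ (Real.rpow_nonneg hM_nonneg _)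
            exact mul_le_mul_of_nonneg_right hTτ (Real.rpow_nonneg hτpos.le _)
        _ = C * (τ ^ α i * τ * M ^ β i) := by ring
    linarith
  -- choose the maximizing index
  obtain ⟨i₀, -, hi₀⟩ := Finset.exists_max_image Finset.univ
    (fun i => τ ^ (α i + 1) * M ^ (β i)) ⟨⟨0, hm⟩, Finset.mem_univ _⟩
  refine ⟨i₀, ?_⟩
  set D : ℝ := C * m * τ ^ (α i₀ + 1) with hD_def
  have hDpos : 0 < D := by
    have : (0:ℝ) < m := Nat.cast_pos.2 hm
    positivity
  have hMD : M ≤ C + D * M ^ (β i₀) := by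
    have hsum2 : ∑ i, τ ^ (α i + 1) * M ^ (β i) ≤ m * (τ ^ (α i₀ + 1) * M ^ (β i₀)) := by
      have := Finset.sum_le_card_nsmul Finset.univ (fun i => τ ^ (α i + 1) * M ^ (β i))
        (τ ^ (α i₀ + 1) * M ^ (β i₀)) (fun i _ => hi₀ i (Finset.mem_univ i))
      simpa [Finset.card_univ, nsmul_eq_mul] using this
    calc M ≤ C + C * ∑ i, τ ^ (α i + 1) * M ^ (β i) := hsum
      _ ≤ C + C * (m * (τ ^ (α i₀ + 1) * M ^ (β i₀))) := by
          apply add_le_add_right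
          exact mul_le_mul_of_nonneg_left hsum2 hC.le
      _ = C + D * M ^ (β i₀) := by rw [hD_def]; ring
  set β₀ : ℝ := β i₀ with hβ₀_def
  have hβ₀ := hβ i₀
  have h1β : 0 < 1 - β₀ := by have := hβ₀.2; simp only [hβ₀_def]; linarith
  set p : ℝ := 1 / (1 - β₀) with hp_def
  have hp1 : (1:ℝ) ≤ p := by
    rw [hp_def, le_div_iff₀ h1β]
    have := hβ₀.1; simp only [hβ₀_def] at this ⊢; linarith
  have hp0 : 0 < p := lt_of_lt_of_le one_pos hp1
  -- F T ≤ M * E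
  have hFT : F T ≤ M * E := by
    have hFeq : F T = G T * Real.exp (h T) := by
      simp only [hG_def]; rw [mul_assoc, ← Real.exp_add]; simp
    rw [hFeq]
    have h1 : Real.exp (h T) ≤ E := by
      rw [hE_def]; exact Real.exp_le_exp.2 (hh_le T hT.le)
    exact mul_le_mul (hs₀max T ⟨hT.le, le_refl T⟩) h1 (Real.exp_nonneg _) hM_nonneg
  set base : ℝ := K + K * m * τ ^ (α i₀ + 1) with hbase_def
  have hbase_ge : K ≤ base := by
    have hm' : (0:ℝ) ≤ m := Nat.cast_nonneg m
    have : 0 ≤ K * m * τ ^ (α i₀ + 1) := by positivity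
    linarith
  have hbase1 : (1:ℝ) ≤ base := le_trans hK1 hbase_ge
  have hbase_pow : base ≤ base ^ p := by
    calc base = base ^ (1:ℝ) := (Real.rpow_one base).symm
      _ ≤ base ^ p := Real.rpow_le_rpow_of_exponent_le hbase1 hp1
  show F T ≤ base ^ p
  rcases le_or_gt M (2 * C) with hM2C | hM2C
  · -- small case
    have : F T ≤ 2 * C * E := le_trans hFT (mul_le_mul_of_nonneg_right hM2C hEpos.le)
    calc F T ≤ 2 * C * E := this
      _ ≤ K := hKCE
      _ ≤ base := hbase_ge
      _ ≤ base ^ p := hbase_pow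
  · -- large case
    have hMpos : 0 < M := by linarith
    have hMβpos : 0 < M ^ β₀ := Real.rpow_pos_of_pos hMpos _
    have h2 : M ≤ 2 * D * M ^ β₀ := by
      have : C < M / 2 := by linarith
      have := hMD
      simp only [hβ₀_def] at *
      linarith
    have h3 : M ^ (1 - β₀) ≤ 2 * D := by
      have heq : M ^ (1 - β₀) = M / M ^ β₀ := by
        rw [Real.rpow_sub hMpos, Real.rpow_one]
      rw [heq, div_le_iff₀ hMβpos]
      linarith
    have h4 : M ≤ (2 * D) ^ p := by
      have heq : (M ^ (1 - β₀)) ^ p = M := by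
        rw [← Real.rpow_mul hMpos.le]
        rw [hp_def, mul_one_div, div_self (ne_of_gt h1β), Real.rpow_one]
      calc M = (M ^ (1 - β₀)) ^ p := heq.symm
        _ ≤ (2 * D) ^ p := Real.rpow_le_rpow (Real.rpow_nonneg hMpos.le _) h3 hp0.le
    have h5 : F T ≤ (2 * D) ^ p * E := le_trans hFT
      (mul_le_mul_of_nonneg_right h4 hEpos.le)
    have h6 : E ≤ E ^ p := by
      calc E = E ^ (1:ℝ) := (Real.rpow_one E).symm
        _ ≤ E ^ p := Real.rpow_le_rpow_of_exponent_le hE1 hp1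
    have h7 : (2 * D) ^ p * E ≤ (2 * D * E) ^ p := by
      rw [Real.mul_rpow (by positivity) hEpos.le]
      exact mul_le_mul_of_nonneg_left h6 (Real.rpow_nonneg (by positivity) _)
    have h8 : 2 * D * E ≤ base := by
      have : 2 * D * E = (2 * C * E) * m * τ ^ (α i₀ + 1) := by rw [hD_def]; ring
      rw [this, hbase_def]
      have hm' : (0:ℝ) ≤ m := Nat.cast_nonneg m
      have hτp : (0:ℝ) ≤ τ ^ (α i₀ + 1) := Real.rpow_nonneg hτpos.le _
      nlinarith [hKCE, hK1]
    calc F T ≤ (2 * D) ^ p * E := h5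
      _ ≤ (2 * D * E) ^ p := h7
      _ ≤ base ^ p := Real.rpow_le_rpow (by positivity) h8 hp0.le
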